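/- arXiv:1105.2461 — 2 statements merged into one kernel-verified Lean document; each statement's English description precedes it below -/
import Mathlib

section
/- For all positive integers i and j, if u and v are vertices of Fin i × Fin j such that u ≺ v in the snake order and there is no w with u ≺ w ≺ v (i.e., v covers u), then u and v are adjacent in the (i,j)-grid graph G(i,j). -/
/-- The `(i,j)`-grid graph on `Fin i × Fin j`: two vertices are adjacent iff
the L1 distance of their coordinates is `1`. -/
def gridGraph (i j : ℕ) : SimpleGraph (Fin i × Fin j) where
  Adj u v := Nat.dist u.1.1 v.1.1 + Nat.dist u.2.1 v.2.1 = 1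
  symm := ⟨by intro u v h; unfold Nat.dist at *; omega⟩
  loopless := ⟨by intro u h; unfold Nat.dist at h; omega⟩

instance (i j : ℕ) : DecidableRel (gridGraph i j).Adj :=
  fun _ _ => inferInstanceAs (Decidable (_ = 1))

/-- The snake relation on `Fin i × Fin j`. -/
def snakeLE {i j : ℕ} (u v : Fin i × Fin j) : Prop :=
  u.2.1 < v.2.1 ∨ (u.2.1 = v.2.1 ∧
    (u.1.1 = v.1.1 ∨ (u.2.1 % 2 = 0 ∧ u.1.1 < v.1.1) ∨ (u.2.1 % 2 = 1 ∧ v.1.1 < u.1.1)))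

/-- If `v` covers `u` in the snake order, then `u` and `v` are adjacent
in the `(i,j)`-grid graph. -/
theorem snake_covby_adj (i j : ℕ) (hi : 0 < i) (hj : 0 < j) (u v : Fin i × Fin j)
    (huv : snakeLE u v) (hne : u ≠ v)
    (hcov : ¬ ∃ w : Fin i × Fin j, (snakeLE u w ∧ u ≠ w) ∧ (snakeLE w v ∧ w ≠ v)) :
    (gridGraph i j).Adj u v := by
  obtain ⟨⟨a, ha⟩, ⟨b, hb⟩⟩ := u
  obtain ⟨⟨c, hc⟩, ⟨d, hd⟩⟩ := v
  simp only [snakeLE, ne_eq, Prod.mk.injEq, Fin.mk.injEq, not_and] at huv hne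
  show Nat.dist a c + Nat.dist b d = 1
  unfold Nat.dist
  by_contra hadj
  apply hcov
  rcases Nat.mod_two_eq_zero_or_one b with he | he
  all_goals rcases huv with hbd | ⟨hbd, h⟩
  -- b even, b < d
  · rcases Nat.lt_or_ge (b + 1) d with h1 | h1
    · refine ⟨(⟨a, ha⟩, ⟨b + 1, by omega⟩), ⟨?_, ?_⟩, ?_, ?_⟩
      all_goals simp only [snakeLE, ne_eq, Prod.mk.injEq, Fin.mk.injEq, true_and, and_true] <;> omega
    · have hd1 : d = b + 1 := by omega
      have hac : a ≠ c := by omega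
      rcases Nat.lt_or_ge (a + 1) i with h2 | h2
      · refine ⟨(⟨a + 1, h2⟩, ⟨b, hb⟩), ⟨?_, ?_⟩, ?_, ?_⟩
        all_goals simp only [snakeLE, ne_eq, Prod.mk.injEq, Fin.mk.injEq, true_and, and_true] <;> omega
      · refine ⟨(⟨a, ha⟩, ⟨d, hd⟩), ⟨?_, ?_⟩, ?_, ?_⟩
        all_goals simp only [snakeLE, ne_eq, Prod.mk.injEq, Fin.mk.injEq, true_and, and_true] <;> omega
  -- b even, b = d
  · refine ⟨(⟨a + 1, by omega⟩, ⟨b, hb⟩), ⟨?_, ?_⟩, ?_, ?_⟩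
    all_goals simp only [snakeLE, ne_eq, Prod.mk.injEq, Fin.mk.injEq, true_and, and_true] <;> omega
  -- b odd, b < d
  · rcases Nat.lt_or_ge (b + 1) d with h1 | h1
    · refine ⟨(⟨a, ha⟩, ⟨b + 1, by omega⟩), ⟨?_, ?_⟩, ?_, ?_⟩
      all_goals simp only [snakeLE, ne_eq, Prod.mk.injEq, Fin.mk.injEq, true_and, and_true] <;> omega
    · have hd1 : d = b + 1 := by omega
      have hac : a ≠ c := by omega
      rcases Nat.eq_zero_or_pos a with h2 | h2
      · refine ⟨(⟨0, by omega⟩, ⟨d, hd⟩), ⟨?_, ?_⟩, ?_, ?_⟩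
        all_goals simp only [snakeLE, ne_eq, Prod.mk.injEq, Fin.mk.injEq, true_and, and_true] <;> omega
      · refine ⟨(⟨a - 1, by omega⟩, ⟨b, hb⟩), ⟨?_, ?_⟩, ?_, ?_⟩
        all_goals simp only [snakeLE, ne_eq, Prod.mk.injEq, Fin.mk.injEq, true_and, and_true] <;> omega
  -- b odd, b = d
  · refine ⟨(⟨a - 1, by omega⟩, ⟨b, hb⟩), ⟨?_, ?_⟩, ?_, ?_⟩
    all_goals simp only [snakeLE, ne_eq, Prod.mk.injEq, Fin.mk.injEq, true_and, and_true] <;> omega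
end

section
/- For all integers i ≥ 3 and j ≥ 1, the (i,j)-grid graph G(i,j) has a Hamiltonian path whose first three vertices are (0,0), (1,0), and (2,0) in this order (i.e., the path starts with three consecutive vertices of a borderline). -/
/-- Snake (boustrophedon) enumeration of the grid. -/
def snakeF (i j : ℕ) (hi : 0 < i) (hj : 0 < j) (k : ℕ) : Fin i × Fin j :=
  (⟨if (k / i) % 2 = 0 then k % i else i - 1 - k % i, by
      split
      · exact Nat.mod_lt _ hi
      · omega⟩,
   ⟨(k / i) % j, Nat.mod_lt _ hj⟩)

lemma snake_adj (i j k : ℕ) (hi : 0 < i) (hj : 0 < j) (hk : k + 1 < i * j) :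
    (gridGraph i j).Adj (snakeF i j hi hj k) (snakeF i j hi hj (k + 1)) := by
  have hc : k % i < i := Nat.mod_lt _ hi
  have hkeq : i * (k / i) + k % i = k := Nat.div_add_mod k i
  set q := k / i with hq
  set c := k % i with hcdef
  have hqj : q < j := Nat.div_lt_of_lt_mul (by omega)
  by_cases h : c + 1 < i
  · have h1 : (k + 1) / i = q := by
      rw [show k + 1 = i * q + (c + 1) by omega, Nat.mul_add_div hi,
        Nat.div_eq_of_lt h, Nat.add_zero]
    have h2 : (k + 1) % i = c + 1 := by
      rw [show k + 1 = i * q + (c + 1) by omega, Nat.mul_add_mod,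
        Nat.mod_eq_of_lt h]
    show Nat.dist _ _ + Nat.dist _ _ = 1
    simp only [snakeF, h1, h2, ← hq, ← hcdef]
    unfold Nat.dist
    by_cases hp : q % 2 = 0 <;> simp [hp] <;> omega
  · have hms : i * (q + 1) = i * q + i := Nat.mul_succ i q
    have hk1 : k + 1 = i * (q + 1) := by omega
    have h1 : (k + 1) / i = q + 1 := by
      rw [hk1, Nat.mul_div_cancel_left _ hi]
    have h2 : (k + 1) % i = 0 := by rw [hk1]; exact Nat.mul_mod_right i (q + 1)
    have hq1 : q + 1 < j := by
      have h3 : i * (q + 1) < i * j := hk1 ▸ hk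
      exact Nat.lt_of_mul_lt_mul_left h3
    have hqj' : q % j = q := Nat.mod_eq_of_lt (by omega)
    have hq1j : (q + 1) % j = q + 1 := Nat.mod_eq_of_lt hq1
    show Nat.dist _ _ + Nat.dist _ _ = 1
    simp only [snakeF, h1, h2, ← hq, ← hcdef, hqj', hq1j]
    unfold Nat.dist
    by_cases hp : q % 2 = 0 <;>
      by_cases hp' : (q + 1) % 2 = 0 <;> simp [hp, hp'] <;> omega

lemma snake_inj (i j : ℕ) (hi : 0 < i) (hj : 0 < j) {k k' : ℕ}
    (hk : k < i * j) (hk' : k' < i * j)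
    (h : snakeF i j hi hj k = snakeF i j hi hj k') : k = k' := by
  have hc : k % i < i := Nat.mod_lt _ hi
  have hc' : k' % i < i := Nat.mod_lt _ hi
  have hd : i * (k / i) + k % i = k := Nat.div_add_mod k i
  have hd' : i * (k' / i) + k' % i = k' := Nat.div_add_mod k' i
  have hqj : k / i < j := Nat.div_lt_of_lt_mul hk
  have hqj' : k' / i < j := Nat.div_lt_of_lt_mul hk'
  have h1 := congrArg (fun p => p.2.1) h
  have h2 := congrArg (fun p => p.1.1) h
  simp only [snakeF, Nat.mod_eq_of_lt hqj, Nat.mod_eq_of_lt hqj'] at h1 h2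
  rw [h1] at h2
  have hcc : k % i = k' % i := by
    by_cases hp : (k' / i) % 2 = 0 <;> simp [hp] at h2 <;> omega
  rw [← hd, ← hd', h1, hcc]

lemma snake_surj (i j : ℕ) (hi : 0 < i) (hj : 0 < j) (v : Fin i × Fin j) :
    ∃ k < i * j, snakeF i j hi hj k = v := by
  obtain ⟨⟨a, ha⟩, ⟨b, hb⟩⟩ := v
  set t : ℕ := if b % 2 = 0 then a else i - 1 - a with ht
  have htlt : t < i := by rw [ht]; split <;> omega
  refine ⟨b * i + t, ?_, ?_⟩
  · have h1 : b * i ≤ (j - 1) * i := Nat.mul_le_mul_right i (by omega)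
    have h2 : (j - 1) * i = j * i - 1 * i := Nat.sub_mul j 1 i
    have h3 : 1 * i = i := one_mul i
    have h5 : i ≤ j * i := Nat.le_mul_of_pos_left i hj
    have h4 : j * i = i * j := Nat.mul_comm j i
    omega
  · have h1 : (b * i + t) / i = b := by
      rw [mul_comm, Nat.mul_add_div hi, Nat.div_eq_of_lt htlt, Nat.add_zero]
    have h2 : (b * i + t) % i = t := by
      rw [mul_comm, Nat.mul_add_mod, Nat.mod_eq_of_lt htlt]
    simp only [snakeF, h1, h2, Nat.mod_eq_of_lt hb]
    refine Prod.ext (Fin.ext ?_) (Fin.ext rfl)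
    simp only [ht]
    by_cases hp : b % 2 = 0 <;> simp [hp] <;> omega

lemma walkOfFn {V : Type*} {G : SimpleGraph V} (f : ℕ → V) :
    ∀ n : ℕ, (∀ k < n, G.Adj (f k) (f (k + 1))) →
      ∃ w : G.Walk (f 0) (f n), w.support = (List.range (n + 1)).map f := by
  intro n
  induction n with
  | zero => intro _; exact ⟨SimpleGraph.Walk.nil, by simp [List.range_succ]⟩
  | succ n ih =>
    intro h
    obtain ⟨w, hw⟩ := ih (fun k hk => h k (by omega))
    refine ⟨w.concat (h n (by omega)), ?_⟩
    rw [SimpleGraph.Walk.support_concat, hw]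
    simp [List.range_succ]

/-- For `i ≥ 3`, the `(i,j)`-grid graph has a Hamiltonian path whose first three
vertices are `(0,0)`, `(1,0)` and `(2,0)` in this order. -/
theorem grid_hamiltonian_path_three_start (i j : ℕ) (hi : 3 ≤ i) (hj : 1 ≤ j) :
    ∃ (v : Fin i × Fin j) (w : (gridGraph i j).Walk (⟨0, by omega⟩, ⟨0, by omega⟩) v),
      w.IsHamiltonian ∧
      w.support.take 3 =
        [(⟨0, by omega⟩, ⟨0, by omega⟩), (⟨1, by omega⟩, ⟨0, by omega⟩),
         (⟨2, by omega⟩, ⟨0, by omega⟩)] := by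
  have hi' : 0 < i := by omega
  have hj' : 0 < j := by omega
  have hij : 3 ≤ i * j := by
    calc 3 ≤ i := hi
    _ = i * 1 := (mul_one i).symm
    _ ≤ i * j := Nat.mul_le_mul_left i hj
  set f := snakeF i j hi' hj' with hf
  have hsmall : ∀ k (hk : k < i), f k = (⟨k, hk⟩, ⟨0, hj'⟩) := by
    intro k hk
    have h1 : k / i = 0 := Nat.div_eq_of_lt hk
    have h2 : k % i = k := Nat.mod_eq_of_lt hk
    simp [hf, snakeF, h1, h2]
  obtain ⟨w, hw⟩ := walkOfFn f (i * j - 1)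
    (fun k hk => snake_adj i j k hi' hj' (by omega))
  have hf0 : f 0 = ((⟨0, by omega⟩, ⟨0, by omega⟩) : Fin i × Fin j) :=
    hsmall 0 (by omega)
  refine ⟨f (i * j - 1), w.copy hf0 rfl, ?_, ?_⟩
  · intro a
    rw [SimpleGraph.Walk.support_copy, hw, show i * j - 1 + 1 = i * j by omega]
    have hnodup : ((List.range (i * j)).map f).Nodup := by
      refine List.Nodup.map_on ?_ List.nodup_range
      intro x hx y hy hxy
      exact snake_inj i j hi' hj' (List.mem_range.mp hx) (List.mem_range.mp hy) hxy
    have hmem : a ∈ (List.range (i * j)).map f := by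
      obtain ⟨k, hk, hfk⟩ := snake_surj i j hi' hj' a
      exact List.mem_map.mpr ⟨k, List.mem_range.mpr hk, hfk⟩
    letI : BEq (Fin i × Fin j) := instBEqOfDecidableEq
    exact List.count_eq_one_of_mem hnodup hmem
  · rw [SimpleGraph.Walk.support_copy, hw, show i * j - 1 + 1 = i * j by omega]
    rw [← List.map_take, List.take_range, show min 3 (i * j) = 3 by omega]
    rw [show List.range 3 = [0, 1, 2] by rfl]
    rw [List.map_cons, List.map_cons, List.map_cons, List.map_nil,
      hsmall 0 (by omega), hsmall 1 (by omega), hsmall 2 (by omega)]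
end
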